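/- Let φ : Ω → ℝ be continuous and let μ and ν be ergodic S-invariant Borel probability measures on Ω, each satisfying the Bowen-Gibbs property for φ (possibly with different constants). Then μ and ν are equivalent measures, and hence μ = ν. -/

import Mathlib

open Filter Topology MeasureTheory
open scoped ENNReal NNReal

namespace GP

/-- The configuration space `Ω = E^ℤ`. -/
abbrev Conf (E : Type*) := ℤ → E

variable {E : Type*}

/-- The shift by `i`: `(shiftZ i ω) k = ω (k + i)`.  The left shift `S` is `shiftZ 1`. -/
def shiftZ (i : ℤ) (ω : Conf E) : Conf E := fun k => ω (k + i)

/-- The cylinder set determined by a word `w ∈ E^n` (placed on coordinates `0,…,n-1`). -/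
def cylW {n : ℕ} (w : Fin n → E) : Set (Conf E) := {ω | ∀ j : Fin n, ω ((j : ℕ) : ℤ) = w j}

/-- The cylinder set `[ω_0^{n-1}]`. -/
def cylPt (ω : Conf E) (n : ℕ) : Set (Conf E) :=
  {ω' | ∀ j : ℕ, j < n → ω' (j : ℤ) = ω (j : ℤ)}

/-- Birkhoff sum `S_n φ = ∑_{k=0}^{n-1} φ ∘ S^k`. -/
def birk (φ : Conf E → ℝ) (n : ℕ) (ω : Conf E) : ℝ :=
  ∑ k ∈ Finset.range n, φ (shiftZ (k : ℤ) ω)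

/-- Topological pressure of `φ` on the full shift:
`P(φ) = lim_n (1/n) log ∑_{w ∈ E^n} sup_{ω ∈ [w]} exp (S_n φ (ω))`
(the limit exists; we use `limsup` as the defining expression). -/
noncomputable def press [Fintype E] (φ : Conf E → ℝ) : ℝ :=
  Filter.limsup (fun n : ℕ =>
    Real.log (∑ w : Fin n → E, sSup ((fun ω => Real.exp (birk φ n ω)) '' cylW w)) / n) atTop

/-- Kolmogorov–Sinai entropy of a shift-invariant measure on the full shift,
computed along the canonical generating partition into cylinders
(the limit exists; we use `limsup` as the defining expression). -/
noncomputable def ent [Fintype E] [MeasurableSpace E] (μ : Measure (Conf E)) : ℝ :=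
  Filter.limsup (fun n : ℕ =>
    (- ∑ w : Fin n → E, ((μ (cylW w)).toReal * Real.log (μ (cylW w)).toReal)) / n) atTop

/-- Shift invariance of a measure. -/
def ShiftInv [MeasurableSpace E] (μ : Measure (Conf E)) : Prop :=
  Measure.map (shiftZ 1) μ = μ

/-- `μ` is an equilibrium state for `φ`: `μ` is a shift-invariant Borel probability
measure with `h(μ) + ∫ φ dμ = P(φ)`. -/
def IsEquilibrium [Fintype E] [MeasurableSpace E] (φ : Conf E → ℝ)
    (μ : Measure (Conf E)) : Prop :=
  IsProbabilityMeasure μ ∧ ShiftInv μ ∧ ent μ + ∫ ω, φ ω ∂μ = press φ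

/-- `ω^c`: the configuration equal to `c` at site `0` and to `ω` elsewhere. -/
def upd0 (ω : Conf E) (c : E) : Conf E := Function.update ω 0 c

/-- Partial sums `ρ_n(ξ,η) = ∑_{i=-n}^{n} (φ(S^i ξ) - φ(S^i η))`. -/
noncomputable def rhoN (φ : Conf E → ℝ) (ξ η : Conf E) (n : ℕ) : ℝ :=
  ∑ i ∈ Finset.Icc (-(n : ℤ)) (n : ℤ), (φ (shiftZ i ξ) - φ (shiftZ i η))

/-- `φ` has the extensibility property: for all `a b ∈ E`, the functions
`ω ↦ ∑_{i=-n}^{n} (φ(S^i(ω^b)) - φ(S^i(ω^a)))` converge uniformly as `n → ∞`. -/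
def Extensible (φ : Conf E → ℝ) : Prop :=
  ∀ a b : E, ∃ r : Conf E → ℝ,
    TendstoUniformly (fun n ω => rhoN φ (upd0 ω b) (upd0 ω a) n) r atTop

/-- The cocycle `ρ^φ(ξ,η) = lim_n ∑_{i=-n}^{n} (φ(S^i ξ) - φ(S^i η))`. -/
noncomputable def rho (φ : Conf E → ℝ) (ξ η : Conf E) : ℝ :=
  limUnder atTop (rhoN φ ξ η)

/-- `ξ` and `η` differ in at most finitely many coordinates. -/
def FinDiff (ξ η : Conf E) : Prop := {k : ℤ | ξ k ≠ η k}.Finite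

/-- `ovr Λ ξ ω` is the configuration `ξ_Λ ω_{ℤ∖Λ}`, equal to `ξ` on `Λ` and to `ω` off `Λ`. -/
def ovr (Λ : Finset ℤ) (ξ : {k // k ∈ Λ} → E) (ω : Conf E) : Conf E :=
  fun k => if h : k ∈ Λ then ξ ⟨k, h⟩ else ω k

/-- `γ` is a specification: each `γ_Λ(·|ω_{Λ^c})` is a probability distribution on `E^Λ`,
and the family is consistent (`γ_Λ = γ_Λ ∘ γ_V` for `V ⊆ Λ`); here `γ Λ ω` denotes
`γ_Λ(ω_Λ | ω_{Λ^c})`. -/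
def IsSpecification [Fintype E] (γ : Finset ℤ → Conf E → ℝ) : Prop :=
  (∀ (Λ : Finset ℤ) (ω : Conf E), 0 ≤ γ Λ ω) ∧
  (∀ (Λ : Finset ℤ) (ω : Conf E), ∑ ξ : {k // k ∈ Λ} → E, γ Λ (ovr Λ ξ ω) = 1) ∧
  (∀ V Λ : Finset ℤ, V ⊆ Λ → ∀ ω : Conf E,
     γ Λ ω = (∑ η : {k // k ∈ V} → E, γ Λ (ovr V η ω)) * γ V ω)

/-- Non-nullness: `inf_ω γ_Λ(ω_Λ|ω_{Λ^c}) > 0` for every finite `Λ`. -/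
def NonNull (γ : Finset ℤ → Conf E → ℝ) : Prop :=
  ∀ Λ : Finset ℤ, ∃ c > (0 : ℝ), ∀ ω : Conf E, c ≤ γ Λ ω

/-- Continuity (quasilocality): `ω ↦ γ_Λ(ω_Λ|ω_{Λ^c})` is continuous for every finite `Λ`. -/
def ContSpec [TopologicalSpace E] (γ : Finset ℤ → Conf E → ℝ) : Prop :=
  ∀ Λ : Finset ℤ, Continuous (γ Λ)

/-- A Gibbsian specification: a non-null continuous specification. -/
def IsGibbsSpec [Fintype E] [TopologicalSpace E] (γ : Finset ℤ → Conf E → ℝ) : Prop :=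
  IsSpecification γ ∧ NonNull γ ∧ ContSpec γ

/-- Translation invariance of a specification: `γ_{Λ+1} = γ_Λ ∘ S`. -/
def SpecTI (γ : Finset ℤ → Conf E → ℝ) : Prop :=
  ∀ (Λ : Finset ℤ) (ω : Conf E), γ (Λ.image (· + 1)) ω = γ Λ (shiftZ 1 ω)

/-- `μ` is a DLR-Gibbs measure for the specification `γ`: `μ` is a Borel probability
measure satisfying the DLR equations `∫ γ_Λ(f|·) dμ = ∫ f dμ` for every finite `Λ`
and every continuous `f` (equivalently, each `γ_Λ` is a version of the conditional
probabilities of `μ`). -/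
def IsDLRGibbs [Fintype E] [MeasurableSpace E] [TopologicalSpace E]
    (γ : Finset ℤ → Conf E → ℝ) (μ : Measure (Conf E)) : Prop :=
  IsProbabilityMeasure μ ∧
  ∀ (Λ : Finset ℤ) (f : Conf E → ℝ), Continuous f →
    ∫ ω, (∑ ξ : {k // k ∈ Λ} → E, γ Λ (ovr Λ ξ ω) * f (ovr Λ ξ ω)) ∂μ = ∫ ω, f ω ∂μ

/-- The specification `γ^φ` associated with an extensible potential `φ`:
`γ^φ_Λ(ω_Λ|ω_{Λ^c}) = (∑_{ξ_Λ ∈ E^Λ} exp ρ^φ(ξ_Λ ω_{ℤ∖Λ}, ω))⁻¹`. -/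
noncomputable def specOf [Fintype E] (φ : Conf E → ℝ) : Finset ℤ → Conf E → ℝ :=
  fun Λ ω => (∑ ξ : {k // k ∈ Λ} → E, Real.exp (rho φ (ovr Λ ξ ω) ω))⁻¹

/-- The configuration `𝐚_{-∞}^{-1} b ω_1^{∞}`: equal to `a` at all negative
coordinates, to `b` at coordinate `0`, and to `ω` at positive coordinates. -/
def bca (a : E) (ω : Conf E) (b : E) : Conf E :=
  fun k => if k < 0 then a else if k = 0 then b else ω k

/-- The potential associated with a specification:
`φ_γ(ω) = log (γ_{{0}}(ω_0 | 𝐚_{-∞}^{-1} ω_1^{∞}) / γ_{{0}}(a | 𝐚_{-∞}^{-1} ω_1^{∞}))`. -/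
noncomputable def phiOf (γ : Finset ℤ → Conf E → ℝ) (a : E) (ω : Conf E) : ℝ :=
  Real.log (γ ({0} : Finset ℤ) (bca a ω (ω 0)) / γ ({0} : Finset ℤ) (bca a ω a))

/-- `μ` is weak Bowen-Gibbs for `φ` with constant `P`. -/
def WeakBowenGibbs [MeasurableSpace E] (μ : Measure (Conf E)) (φ : Conf E → ℝ)
    (P : ℝ) : Prop :=
  ∃ C : ℕ → ℝ, (∀ n, 0 < C n) ∧
    Tendsto (fun n : ℕ => Real.log (C n) / n) atTop (𝓝 0) ∧
    ∀ (n : ℕ) (ω : Conf E),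
      (C n)⁻¹ ≤ (μ (cylPt ω n)).toReal / Real.exp (birk φ n ω - n * P) ∧
      (μ (cylPt ω n)).toReal / Real.exp (birk φ n ω - n * P) ≤ C n


/-- `μ` is Bowen-Gibbs for `φ`: there are constants `C > 1` and `P` such that
`C⁻¹ ≤ μ([ω_0^{n-1}]) / exp(S_nφ(ω) - nP) ≤ C` for all `n` and `ω`. -/
def BowenGibbs [MeasurableSpace E] (μ : Measure (Conf E)) (φ : Conf E → ℝ) : Prop :=
  ∃ C P : ℝ, 1 < C ∧ ∀ (n : ℕ) (ω : Conf E),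
    C⁻¹ ≤ (μ (cylPt ω n)).toReal / Real.exp (birk φ n ω - n * P) ∧
    (μ (cylPt ω n)).toReal / Real.exp (birk φ n ω - n * P) ≤ C

-- auxiliary lemmas
lemma shiftZ_shiftZ (a b : ℤ) (ω : Conf E) : shiftZ a (shiftZ b ω) = shiftZ (a + b) ω := by
  funext k; simp [shiftZ, add_assoc]

lemma shiftZ_zero (ω : Conf E) : shiftZ 0 ω = ω := by funext k; simp [shiftZ]

lemma measurable_shiftZ [MeasurableSpace E] (i : ℤ) :
    Measurable (shiftZ i : Conf E → Conf E) :=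
  measurable_pi_lambda _ fun _ => measurable_pi_apply _

lemma map_shiftZ_eq [MeasurableSpace E] {μ : Measure (Conf E)}
    (h : Measure.map (shiftZ 1) μ = μ) : ∀ i : ℤ, Measure.map (shiftZ i) μ = μ := by
  have h0 : Measure.map (shiftZ 0) μ = μ := by
    rw [show (shiftZ 0 : Conf E → Conf E) = id from funext shiftZ_zero, Measure.map_id]
  have hcomp : ∀ a b : ℤ,
      Measure.map (shiftZ (a + b)) μ = Measure.map (shiftZ a) (Measure.map (shiftZ b) μ) := by
    intro a b
    rw [Measure.map_map (measurable_shiftZ a) (measurable_shiftZ b)]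
    congr 1
    funext ω; exact (shiftZ_shiftZ a b ω).symm
  have hneg : Measure.map (shiftZ (-1)) μ = μ := by
    conv_lhs => rw [← h]
    rw [← hcomp]; norm_num [h0]
  intro i
  induction i using Int.induction_on with
  | zero => exact h0
  | succ n ih =>
      have : ((n : ℤ) + 1) = 1 + (n : ℤ) := by ring
      rw [this, hcomp, ih, h]
  | pred n ih =>
      have : (-(n : ℤ) - 1) = (-1) + (-(n : ℤ)) := by ring
      rw [this, hcomp, ih, hneg]

lemma measurableSet_cylPt [MeasurableSpace E] [MeasurableSingletonClass E]
    (ω : Conf E) (n : ℕ) : MeasurableSet (cylPt ω n) := by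
  have : cylPt ω n = ⋂ (j : ℕ) (_ : j < n), (fun ω' : Conf E => ω' (j : ℤ)) ⁻¹' {ω (j : ℤ)} := by
    ext ω'; simp [cylPt]
  rw [this]
  exact MeasurableSet.iInter fun j => MeasurableSet.iInter fun _ =>
    (measurable_pi_apply _) (measurableSet_singleton _)

/-- interval cylinder -/
def cylI (m : ℕ) (ω : Conf E) : Set (Conf E) :=
  {ω' | ∀ k ∈ Finset.Icc (-(m : ℤ)) (m : ℤ), ω' k = ω k}

lemma cylI_eq_preimage (m : ℕ) (ω : Conf E) :
    cylI m ω = (shiftZ (-(m : ℤ))) ⁻¹' (cylPt (shiftZ (-(m : ℤ)) ω) (2 * m + 1)) := by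
  ext ω'
  simp only [cylI, cylPt, Set.mem_preimage, Set.mem_setOf_eq, shiftZ, Finset.mem_Icc]
  constructor
  · intro h j hj
    apply h
    constructor <;> omega
  · intro h k hk
    have hj : ((k + (m : ℤ)).toNat : ℤ) = k + m := Int.toNat_of_nonneg (by omega)
    have hlt : (k + (m : ℤ)).toNat < 2 * m + 1 := by omega
    have := h _ hlt
    rwa [show (((k + (m : ℤ)).toNat : ℤ) + -(m : ℤ)) = k by omega] at this

lemma le_smul_of_cylPt [Fintype E] [Nonempty E] [TopologicalSpace E] [DiscreteTopology E]
    [MeasurableSpace E] [MeasurableSingletonClass E]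
    {μ ν : Measure (Conf E)} (hμp : IsProbabilityMeasure μ) (hνp : IsProbabilityMeasure ν)
    (hμs : Measure.map (shiftZ 1) μ = μ) (hνs : Measure.map (shiftZ 1) ν = ν)
    {K : ℝ≥0∞} (hK0 : K ≠ 0) (hKt : K ≠ ∞)
    (hcyl : ∀ (n : ℕ) (ω : Conf E), μ (cylPt ω n) ≤ K * ν (cylPt ω n)) :
    ∀ ⦃A : Set (Conf E)⦄, MeasurableSet A → μ A ≤ K * ν A := by
  classical
  -- interval cylinder bound
  have hcylI : ∀ (m : ℕ) (ω : Conf E), μ (cylI m ω) ≤ K * ν (cylI m ω) := by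
    intro m ω
    rw [cylI_eq_preimage]
    have hB := measurableSet_cylPt (E := E) (shiftZ (-(m : ℤ)) ω) (2 * m + 1)
    rw [← Measure.map_apply (measurable_shiftZ _) hB, ← Measure.map_apply (measurable_shiftZ _) hB,
      map_shiftZ_eq hμs, map_shiftZ_eq hνs]
    exact hcyl _ _
  -- the C-sets
  have hmeasC : ∀ (m : ℕ) (ω : Conf E), MeasurableSet (cylI m ω) := by
    intro m ω
    rw [cylI_eq_preimage]
    exact (measurable_shiftZ _) (measurableSet_cylPt _ _)
  set Λ : ℕ → Finset ℤ := fun m => Finset.Icc (-(m : ℤ)) (m : ℤ) with hΛ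
  set C : ∀ m : ℕ, ({k // k ∈ Λ m} → E) → Set (Conf E) :=
    fun m w => {ω | ∀ k (hk : k ∈ Λ m), ω k = w ⟨k, hk⟩} with hC
  have hCeq : ∀ (m : ℕ) w (ω : Conf E), ω ∈ C m w → C m w = cylI m ω := by
    intro m w ω hω
    ext ω'
    simp only [hC, Set.mem_setOf_eq, cylI, hΛ] at *
    exact ⟨fun h k hk => by rw [h k hk, hω k hk],
           fun h k hk => by rw [h k hk, hω k hk]⟩
  have hCself : ∀ (m : ℕ) (ω : Conf E), ω ∈ C m (fun k => ω k.1) := by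
    intro m ω k hk; rfl
  -- V m
  intro A hA
  -- first: bound on open sets
  have hopen : ∀ U : Set (Conf E), IsOpen U → μ U ≤ K * ν U := by
    intro U hU
    set V : ℕ → Set (Conf E) := fun m => {ω | cylI m ω ⊆ U} with hV
    have hVU : ∀ m, V m ⊆ U := fun m ω hω => hω (by intro k hk; rfl)
    have hVmono : Monotone V := by
      intro a b hab ω hω
      refine Set.Subset.trans ?_ hω
      intro ω' hω' k hk
      apply hω'
      simp only [hΛ, Finset.mem_Icc] at *
      omega
    have hVunion : (⋃ m, V m) = U := by
      apply Set.Subset.antisymm (Set.iUnion_subset hVU)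
      intro ω hω
      obtain ⟨I, u, hu, hsub⟩ := isOpen_pi_iff.mp hU ω hω
      refine Set.mem_iUnion.2 ⟨I.sup fun i => i.natAbs, ?_⟩
      intro ω' hω'
      apply hsub
      intro i hi
      have hle : i.natAbs ≤ I.sup fun i => i.natAbs := Finset.le_sup hi
      have : ω' i = ω i := by
        apply hω'
        simp only [Finset.mem_Icc]
        omega
      rw [this]
      exact (hu i hi).2
    -- V m as finite disjoint union
    have hVeq : ∀ m, V m = ⋃ w ∈ Finset.univ.filter (fun w => C m w ⊆ U), C m w := by
      intro m
      ext ω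
      simp only [Set.mem_iUnion, Finset.mem_filter, Finset.mem_univ, true_and]
      constructor
      · intro hω
        refine ⟨fun k => ω k.1, ?_, hCself m ω⟩
        rw [hCeq m (fun k => ω k.1) ω (hCself m ω)]; exact hω
      · rintro ⟨w, hwU, hωw⟩
        show cylI m ω ⊆ U
        rw [← hCeq m w ω hωw]; exact hwU
    have hVbound : ∀ m, μ (V m) ≤ K * ν (V m) := by
      intro m
      rw [hVeq m]
      have hdisj : (↑(Finset.univ.filter (fun w => C m w ⊆ U)) : Set _).PairwiseDisjoint (C m) := by
        intro w _ w' _ hww'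
        refine Set.disjoint_left.2 fun ω hω hω' => hww' ?_
        funext k
        rw [← hω k.1 k.2, ← hω' k.1 k.2]
      have hmeas : ∀ w ∈ Finset.univ.filter (fun w => C m w ⊆ U), MeasurableSet (C m w) := by
        intro w _
        have : ∃ ω : Conf E, ω ∈ C m w := by
          refine ⟨fun k => if hk : k ∈ Λ m then w ⟨k, hk⟩ else Classical.arbitrary E, ?_⟩
          intro k hk; simp [hk]
        obtain ⟨ω, hω⟩ := this
        rw [hCeq m w ω hω]; exact hmeasC m ω
      rw [measure_biUnion_finset hdisj hmeas, measure_biUnion_finset hdisj hmeas,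
        Finset.mul_sum]
      refine Finset.sum_le_sum fun w hw => ?_
      have : ∃ ω : Conf E, ω ∈ C m w := by
        refine ⟨fun k => if hk : k ∈ Λ m then w ⟨k, hk⟩ else Classical.arbitrary E, ?_⟩
        intro k hk; simp [hk]
      obtain ⟨ω, hω⟩ := this
      rw [hCeq m w ω hω]
      exact hcylI m ω
    have hdir : Directed (· ⊆ ·) V := hVmono.directed_le
    calc μ U = μ (⋃ m, V m) := by rw [hVunion]
      _ = ⨆ m, μ (V m) := hdir.measure_iUnion
      _ ≤ K * ν U := by
          refine iSup_le fun m => (hVbound m).trans ?_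
          exact mul_le_mul_right (measure_mono (hVU m)) K
  -- now outer regularity
  haveI : BorelSpace E := ⟨by
    rw [borel_eq_top_of_discrete]
    refine le_antisymm le_top ?_
    intro s _; exact s.to_countable.measurableSet⟩
  haveI : BorelSpace (Conf E) := by infer_instance
  haveI := hμp; haveI := hνp
  refine ENNReal.le_of_forall_pos_le_add fun ε hε hfin => ?_
  have hεK : (0 : ℝ≥0∞) < (ε : ℝ≥0∞) / K :=
    ENNReal.div_pos (by exact_mod_cast hε.ne') hKt
  have hlt : ν A < ν A + (ε : ℝ≥0∞) / K :=
    ENNReal.lt_add_right (measure_ne_top ν A) hεK.ne'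
  obtain ⟨U, hAU, hUopen, hUlt⟩ := A.exists_isOpen_lt_of_lt _ hlt
  calc μ A ≤ μ U := measure_mono hAU
    _ ≤ K * ν U := hopen U hUopen
    _ ≤ K * (ν A + (ε : ℝ≥0∞) / K) := mul_le_mul_right hUlt.le K
    _ = K * ν A + K * ((ε : ℝ≥0∞) / K) := by rw [mul_add]
    _ = K * ν A + ε := by rw [ENNReal.mul_div_cancel hK0 hKt]

lemma measurableSet_cylW [MeasurableSpace E] [MeasurableSingletonClass E]
    {n : ℕ} (w : Fin n → E) : MeasurableSet (cylW w) := by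
  have : cylW w = ⋂ j : Fin n, (fun ω' : Conf E => ω' ((j : ℕ) : ℤ)) ⁻¹' {w j} := by
    ext ω'; simp [cylW]
  rw [this]
  exact MeasurableSet.iInter fun j => (measurable_pi_apply _) (measurableSet_singleton _)
/-- Two ergodic shift-invariant Bowen-Gibbs measures for the same
continuous potential are equivalent, hence equal. -/
theorem bowenGibbs_ergodic_unique [Fintype E] [Nonempty E] [TopologicalSpace E] [DiscreteTopology E]
    [MeasurableSpace E] [MeasurableSingletonClass E]
    (φ : Conf E → ℝ) (hφ : Continuous φ)
    (μ ν : Measure (Conf E)) (hμp : IsProbabilityMeasure μ) (hνp : IsProbabilityMeasure ν)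
    (hμe : Ergodic (shiftZ 1) μ) (hνe : Ergodic (shiftZ 1) ν)
    (hμg : BowenGibbs μ φ) (hνg : BowenGibbs ν φ) :
    (μ ≪ ν ∧ ν ≪ μ) ∧ μ = ν := by
  classical
  haveI := hμp; haveI := hνp
  have t1 : IsFiniteMeasure μ := inferInstance
  have t2 : SFinite μ := inferInstance
  have t4 : SigmaFinite ν := inferInstance
  have t3 : μ.HaveLebesgueDecomposition ν := Measure.haveLebesgueDecomposition_of_sigmaFinite μ ν
  obtain ⟨Cμ, Pμ, hCμ, hμb⟩ := hμg
  obtain ⟨Cν, Pν, hCν, hνb⟩ := hνg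
  have hCμ0 : (0 : ℝ) < Cμ := lt_trans one_pos hCμ
  have hCν0 : (0 : ℝ) < Cν := lt_trans one_pos hCν
  -- representative configuration for a word
  set rep : ∀ n : ℕ, (Fin n → E) → Conf E := fun n w k =>
    if h : 0 ≤ k ∧ k < n then w ⟨k.toNat, by omega⟩ else Classical.arbitrary E with hrepdef
  have hrepval : ∀ (n : ℕ) (w : Fin n → E) (j : ℕ) (hj : j < n),
      rep n w (j : ℤ) = w ⟨j, hj⟩ := by
    intro n w j hj
    simp only [hrepdef]
    rw [dif_pos ⟨Int.natCast_nonneg j, by exact_mod_cast hj⟩]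
    exact congrArg w (Fin.ext (Int.toNat_natCast j))
  have hrep : ∀ (n : ℕ) (w : Fin n → E), cylPt (rep n w) n = cylW w := by
    intro n w
    ext ω'
    simp only [cylPt, cylW, Set.mem_setOf_eq]
    constructor
    · intro h j
      rw [h j j.isLt, hrepval n w j j.isLt]
    · intro h j hj
      rw [hrepval n w j hj]
      exact h ⟨j, hj⟩
  -- partition into cylinders
  have hsum : ∀ (ρ : Measure (Conf E)) (_ : IsProbabilityMeasure ρ) (n : ℕ),
      ∑ w : Fin n → E, (ρ (cylW w)).toReal = 1 := by
    intro ρ hρ n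
    have hdisj : Pairwise (Function.onFun Disjoint fun w : Fin n → E => cylW w) := by
      intro w w' hww'
      refine Set.disjoint_left.2 fun ω hω hω' => hww' ?_
      funext j
      rw [← hω j, ← hω' j]
    have huniv : (⋃ w : Fin n → E, cylW w) = Set.univ := by
      refine Set.eq_univ_of_forall fun ω => Set.mem_iUnion.2 ⟨fun j => ω ((j : ℕ) : ℤ), fun j => rfl⟩
    have h1 := measure_iUnion (μ := ρ) hdisj fun w => measurableSet_cylW w
    rw [huniv, measure_univ, tsum_fintype] at h1
    rw [← ENNReal.toReal_sum fun w _ => measure_ne_top ρ _, ← h1, ENNReal.toReal_one]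
  -- partition function
  set Z : ℕ → ℝ := fun n => ∑ w : Fin n → E, Real.exp (birk φ n (rep n w)) with hZdef
  have hZbounds : ∀ (ρ : Measure (Conf E)) (hρ : IsProbabilityMeasure ρ) (C P : ℝ), 1 < C →
      (∀ (n : ℕ) (ω : Conf E),
        C⁻¹ ≤ (ρ (cylPt ω n)).toReal / Real.exp (birk φ n ω - n * P) ∧
        (ρ (cylPt ω n)).toReal / Real.exp (birk φ n ω - n * P) ≤ C) →
      ∀ n : ℕ, Z n ≤ C * Real.exp (n * P) ∧ Real.exp (n * P) ≤ C * Z n := by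
    intro ρ hρ C P hC hb n
    have hC0 : (0 : ℝ) < C := lt_trans one_pos hC
    have hkey : ∀ w : Fin n → E,
        C⁻¹ * Real.exp (birk φ n (rep n w) - n * P) ≤ (ρ (cylW w)).toReal ∧
        (ρ (cylW w)).toReal ≤ C * Real.exp (birk φ n (rep n w) - n * P) := by
      intro w
      obtain ⟨h1, h2⟩ := hb n (rep n w)
      rw [hrep n w] at h1 h2
      have he : (0 : ℝ) < Real.exp (birk φ n (rep n w) - n * P) := Real.exp_pos _
      exact ⟨(le_div_iff₀ he).mp h1, (div_le_iff₀ he).mp h2⟩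
    have hS : ∑ w : Fin n → E, Real.exp (birk φ n (rep n w) - n * P)
        = Z n / Real.exp (n * P) := by
      rw [hZdef]
      rw [Finset.sum_div]
      exact Finset.sum_congr rfl fun w _ => by rw [Real.exp_sub]
    have hlow : C⁻¹ * (Z n / Real.exp (n * P)) ≤ 1 := by
      rw [← hS, Finset.mul_sum]
      rw [← hsum ρ hρ n]
      exact Finset.sum_le_sum fun w _ => (hkey w).1
    have hhigh : 1 ≤ C * (Z n / Real.exp (n * P)) := by
      rw [← hS, Finset.mul_sum]
      rw [← hsum ρ hρ n]
      exact Finset.sum_le_sum fun w _ => (hkey w).2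
    have hexp : (0 : ℝ) < Real.exp ((n : ℝ) * P) := Real.exp_pos _
    constructor
    · have := (inv_mul_le_iff₀ hC0).mp hlow
      rw [mul_one] at this
      exact (div_le_iff₀ hexp).mp this
    · have : Real.exp (n*P) * 1 ≤ Real.exp (n*P) * (C * (Z n / Real.exp (n * P))) :=
        mul_le_mul_of_nonneg_left hhigh hexp.le
      calc Real.exp (n*P) = Real.exp (n*P) * 1 := (mul_one _).symm
        _ ≤ Real.exp (n*P) * (C * (Z n / Real.exp (n * P))) := this
        _ = C * Z n := by field_simp
  -- pressures coincide
  have hPkey : ∀ P₁ C₁ P₂ C₂ : ℝ, 0 < C₁ → 0 < C₂ →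
      (∀ n : ℕ, Z n ≤ C₁ * Real.exp (n * P₁)) →
      (∀ n : ℕ, Real.exp (n * P₂) ≤ C₂ * Z n) → P₂ ≤ P₁ := by
    intro P₁ C₁ P₂ C₂ hC₁ hC₂ hup hlo
    by_contra hlt
    push_neg at hlt
    set d := P₂ - P₁ with hd
    have hd0 : 0 < d := by simp [hd]; linarith
    obtain ⟨n, hn⟩ := exists_nat_gt (Real.log (C₁ * C₂) / d)
    have h1 : Real.exp (n * P₂) ≤ C₂ * (C₁ * Real.exp (n * P₁)) :=
      le_trans (hlo n) (mul_le_mul_of_nonneg_left (hup n) hC₂.le)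
    have h2 : Real.exp ((n : ℝ) * d) ≤ C₁ * C₂ := by
      rw [show (n : ℝ) * d = n * P₂ - n * P₁ by rw [hd]; ring, Real.exp_sub]
      rw [div_le_iff₀ (Real.exp_pos _)]
      nlinarith [Real.exp_pos ((n : ℝ) * P₁)]
    have h3 : (n : ℝ) * d ≤ Real.log (C₁ * C₂) := by
      have hpos : (0 : ℝ) < C₁ * C₂ := mul_pos hC₁ hC₂
      rw [← Real.exp_log hpos] at h2
      exact Real.exp_le_exp.mp h2
    have h4 : Real.log (C₁ * C₂) < (n : ℝ) * d := by
      rw [div_lt_iff₀ hd0] at hn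
      linarith
    linarith
  have hμZ := hZbounds μ hμp Cμ Pμ hCμ hμb
  have hνZ := hZbounds ν hνp Cν Pν hCν hνb
  have hPeq : Pμ = Pν := by
    have h1 : Pν ≤ Pμ := hPkey Pμ Cμ Pν Cν hCμ0 hCν0 (fun n => (hμZ n).1) (fun n => (hνZ n).2)
    have h2 : Pμ ≤ Pν := hPkey Pν Cν Pμ Cμ hCν0 hCμ0 (fun n => (hνZ n).1) (fun n => (hμZ n).2)
    linarith
  -- cylinder comparison
  set K : ℝ≥0∞ := ENNReal.ofReal (Cμ * Cν) with hKdef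
  have hK0 : K ≠ 0 := by
    rw [hKdef]
    simp [ENNReal.ofReal_eq_zero, not_le]
    positivity
  have hKt : K ≠ ∞ := ENNReal.ofReal_ne_top
  have hcompare : ∀ (ρ₁ ρ₂ : Measure (Conf E)) (C₁ C₂ P : ℝ), 0 < C₁ → 0 < C₂ →
      (∀ (n : ℕ) (ω : Conf E),
        (ρ₁ (cylPt ω n)).toReal / Real.exp (birk φ n ω - n * P) ≤ C₁) →
      (∀ (n : ℕ) (ω : Conf E),
        C₂⁻¹ ≤ (ρ₂ (cylPt ω n)).toReal / Real.exp (birk φ n ω - n * P)) →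
      ∀ (n : ℕ) (ω : Conf E), (ρ₁ (cylPt ω n)).toReal ≤ C₁ * C₂ * (ρ₂ (cylPt ω n)).toReal := by
    intro ρ₁ ρ₂ C₁ C₂ P hC₁ hC₂ hb₁ hb₂ n ω
    have he : (0 : ℝ) < Real.exp (birk φ n ω - n * P) := Real.exp_pos _
    have h1 : (ρ₁ (cylPt ω n)).toReal ≤ C₁ * Real.exp (birk φ n ω - n * P) :=
      (div_le_iff₀ he).mp (hb₁ n ω)
    have h2 : C₂⁻¹ * Real.exp (birk φ n ω - n * P) ≤ (ρ₂ (cylPt ω n)).toReal :=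
      (le_div_iff₀ he).mp (hb₂ n ω)
    have h3 : Real.exp (birk φ n ω - n * P) ≤ C₂ * (ρ₂ (cylPt ω n)).toReal := by
      have := mul_le_mul_of_nonneg_left h2 hC₂.le
      rw [← mul_assoc, mul_inv_cancel₀ hC₂.ne', one_mul] at this
      linarith
    nlinarith
  have hcylμν : ∀ (n : ℕ) (ω : Conf E), μ (cylPt ω n) ≤ K * ν (cylPt ω n) := by
    intro n ω
    have h := hcompare μ ν Cμ Cν Pμ hCμ0 hCν0 (fun n ω => (hμb n ω).2)
      (fun n ω => by rw [hPeq]; exact (hνb n ω).1) n ω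
    calc μ (cylPt ω n) = ENNReal.ofReal (μ (cylPt ω n)).toReal :=
          (ENNReal.ofReal_toReal (measure_ne_top μ _)).symm
      _ ≤ ENNReal.ofReal (Cμ * Cν * (ν (cylPt ω n)).toReal) := ENNReal.ofReal_le_ofReal h
      _ = K * ENNReal.ofReal (ν (cylPt ω n)).toReal := by
          rw [hKdef, ENNReal.ofReal_mul (by positivity)]
      _ = K * ν (cylPt ω n) := by rw [ENNReal.ofReal_toReal (measure_ne_top ν _)]
  have hcylνμ : ∀ (n : ℕ) (ω : Conf E), ν (cylPt ω n) ≤ K * μ (cylPt ω n) := by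
    intro n ω
    have h := hcompare ν μ Cν Cμ Pμ hCν0 hCμ0 (fun n ω => by rw [hPeq]; exact (hνb n ω).2)
      (fun n ω => (hμb n ω).1) n ω
    calc ν (cylPt ω n) = ENNReal.ofReal (ν (cylPt ω n)).toReal :=
          (ENNReal.ofReal_toReal (measure_ne_top ν _)).symm
      _ ≤ ENNReal.ofReal (Cν * Cμ * (μ (cylPt ω n)).toReal) := ENNReal.ofReal_le_ofReal h
      _ = K * ENNReal.ofReal (μ (cylPt ω n)).toReal := by
          rw [hKdef, ENNReal.ofReal_mul (by positivity), mul_comm Cμ Cν]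
      _ = K * μ (cylPt ω n) := by rw [ENNReal.ofReal_toReal (measure_ne_top μ _)]
  have hμleν := le_smul_of_cylPt hμp hνp hμe.toMeasurePreserving.map_eq
    hνe.toMeasurePreserving.map_eq hK0 hKt hcylμν
  have hνleμ := le_smul_of_cylPt hνp hμp hνe.toMeasurePreserving.map_eq
    hμe.toMeasurePreserving.map_eq hK0 hKt hcylνμ
  have hac : μ ≪ ν := by
    refine Measure.AbsolutelyContinuous.mk fun s hs h0 => ?_
    have := hμleν hs
    rw [h0, mul_zero] at this
    exact le_antisymm this zero_le
  have hca : ν ≪ μ := by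
    refine Measure.AbsolutelyContinuous.mk fun s hs h0 => ?_
    have := hνleμ hs
    rw [h0, mul_zero] at this
    exact le_antisymm this zero_le
  -- equality via ergodicity of the Radon-Nikodym derivative
  have hemb : MeasurableEmbedding (shiftZ 1 : Conf E → Conf E) := by
    refine MeasurableEquiv.measurableEmbedding
      ⟨⟨shiftZ 1, shiftZ (-1), fun ω => ?_, fun ω => ?_⟩,
        measurable_shiftZ 1, measurable_shiftZ (-1)⟩
    · show shiftZ (-1) (shiftZ 1 ω) = ω
      rw [shiftZ_shiftZ]; norm_num; exact shiftZ_zero ω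
    · show shiftZ 1 (shiftZ (-1) ω) = ω
      rw [shiftZ_shiftZ]; norm_num; exact shiftZ_zero ω
  have h1 := hemb.rnDeriv_map μ ν
  rw [hμe.toMeasurePreserving.map_eq, hνe.toMeasurePreserving.map_eq] at h1
  obtain ⟨c, hc⟩ := hνe.ae_eq_const_of_ae_eq_comp₀
    (Measure.measurable_rnDeriv μ ν).nullMeasurable h1
  have hint : ∫⁻ x, μ.rnDeriv ν x ∂ν = 1 := by
    rw [Measure.lintegral_rnDeriv hac, measure_univ]
  have hc1 : c = 1 := by
    have h2 := lintegral_congr_ae hc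
    simp only [Function.const, lintegral_const, measure_univ, mul_one, hint] at h2
    exact h2.symm
  have heq : μ = ν := by
    refine (Measure.rnDeriv_eq_one_iff_eq hac).mp (hc.trans ?_)
    filter_upwards with x
    simp [hc1]
  exact ⟨⟨hac, hca⟩, heq⟩

end GP
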